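/- For every real number t > 0, define V₅(t) = 4t(2 + 4t⁻³) if t⁻³ ≤ 2/5, V₅(t) = t(14 + t⁻³) if 2/5 ≤ t⁻³ ≤ 10, and V₅(t) = 24t if t⁻³ ≥ 10. Then V₅(t) ∈ E(t), and every element e of E(t) with e ∉ {γ₁(t), γ₂(t), γ₃(t), 8t} satisfies e ≥ V₅(t). -/

import Mathlib

/-- `γ_n(t) = t·n·(2 + n·t⁻³)` -/
noncomputable def gammaF (t : ℝ) (n : ℕ) : ℝ := t * n * (2 + n * (t ^ 3)⁻¹)

/-- `α_k(t) = t·(k(k+2) − 1 + t⁻³)` -/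
noncomputable def alphaF (t : ℝ) (k : ℕ) : ℝ := t * (k * (k + 2) - 1 + (t ^ 3)⁻¹)

/-- `β_l(t) = t·l·(l+2)` -/
noncomputable def betaF (t : ℝ) (l : ℕ) : ℝ := t * l * (l + 2)

/-- The set `E(t)` of nonzero eigenvalues of the unit-volume Berger sphere Laplacian. -/
def EV (t : ℝ) : Set ℝ :=
  {x | ∃ n : ℕ, 1 ≤ n ∧ x = gammaF t n} ∪
  {x | ∃ k : ℕ, Odd k ∧ 1 ≤ k ∧ x = alphaF t k} ∪
  {x | ∃ l : ℕ, Even l ∧ 2 ≤ l ∧ x = betaF t l}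

theorem berger_lambda5 (t : ℝ) (ht : 0 < t) :
    ∃ V : ℝ,
      ((t ^ 3)⁻¹ ≤ 2 / 5 → V = 4 * t * (2 + 4 * (t ^ 3)⁻¹)) ∧
      (2 / 5 ≤ (t ^ 3)⁻¹ ∧ (t ^ 3)⁻¹ ≤ 10 → V = t * (14 + (t ^ 3)⁻¹)) ∧
      (10 ≤ (t ^ 3)⁻¹ → V = 24 * t) ∧
      V ∈ EV t ∧
      ∀ e ∈ EV t, e ∉ ({gammaF t 1, gammaF t 2, gammaF t 3, 8 * t} : Set ℝ) → V ≤ e := by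
  have hs : 0 < (t ^ 3)⁻¹ := by positivity
  set s : ℝ := (t ^ 3)⁻¹ with hsdef
  have hg4 : gammaF t 4 = t * 4 * (2 + 4 * s) := by norm_num [gammaF]; exact Or.inl hsdef.symm
  have ha3 : alphaF t 3 = t * (14 + s) := by norm_num [alphaF]; try ring; exact Or.inl (by rw [hsdef, inv_pow])
  have hb4 : betaF t 4 = 24 * t := by norm_num [betaF]; try ring
  have ha1g1 : alphaF t 1 = gammaF t 1 := by norm_num [alphaF, gammaF]; try ring
  have hb2 : betaF t 2 = 8 * t := by norm_num [betaF]; try ring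
  refine ⟨min (min (gammaF t 4) (alphaF t 3)) (betaF t 4), ?_, ?_, ?_, ?_, ?_⟩
  · intro h
    have e1 : gammaF t 4 ≤ alphaF t 3 := by rw [hg4, ha3]; nlinarith
    have e2 : gammaF t 4 ≤ betaF t 4 := by rw [hg4, hb4]; nlinarith
    rw [min_eq_left e1, min_eq_left e2, hg4]; ring
  · rintro ⟨h1, h2⟩
    have e1 : alphaF t 3 ≤ gammaF t 4 := by rw [hg4, ha3]; nlinarith
    have e2 : alphaF t 3 ≤ betaF t 4 := by rw [ha3, hb4]; nlinarith
    rw [min_eq_right e1, min_eq_left e2, ha3]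
  · intro h
    have e1 : betaF t 4 ≤ gammaF t 4 := by rw [hg4, hb4]; nlinarith
    have e2 : betaF t 4 ≤ alphaF t 3 := by rw [ha3, hb4]; nlinarith
    rw [min_eq_right (le_min e1 e2), hb4]
  · rcases le_total (min (gammaF t 4) (alphaF t 3)) (betaF t 4) with h | h
    · rw [min_eq_left h]
      rcases le_total (gammaF t 4) (alphaF t 3) with hc | hc
      · rw [min_eq_left hc]
        exact Or.inl (Or.inl ⟨4, by norm_num⟩)
      · rw [min_eq_right hc]
        exact Or.inl (Or.inr ⟨3, by decide, by norm_num⟩)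
    · rw [min_eq_right h]
      exact Or.inr ⟨4, by decide, by norm_num⟩
  · rintro e ((⟨n, hn, rfl⟩ | ⟨k, hk, hk1, rfl⟩) | ⟨l, hl, hl2, rfl⟩) hne <;>
      simp only [Set.mem_insert_iff, Set.mem_singleton_iff, not_or] at hne
    · -- gamma case
      obtain ⟨h1, h2, h3, _⟩ := hne
      have hn4 : 4 ≤ n := by
        by_contra hlt
        push_neg at hlt
        interval_cases n <;> simp_all
      have hnr : (4 : ℝ) ≤ (n : ℝ) := by exact_mod_cast hn4
      calc min (min (gammaF t 4) (alphaF t 3)) (betaF t 4) ≤ gammaF t 4 :=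
            le_trans (min_le_left _ _) (min_le_left _ _)
        _ ≤ gammaF t n := by
            rw [hg4]; unfold gammaF; rw [← hsdef]
            nlinarith [mul_nonneg (mul_nonneg (mul_nonneg ht.le hs.le)
                (by linarith : (0:ℝ) ≤ (n:ℝ) - 4)) (by linarith : (0:ℝ) ≤ (n:ℝ) + 4),
              mul_nonneg ht.le (by linarith : (0:ℝ) ≤ (n:ℝ) - 4)]
    · -- alpha case
      obtain ⟨h1, _, _, _⟩ := hne
      have hk3 : 3 ≤ k := by
        rcases Nat.lt_or_ge k 3 with hlt | hge
        · exfalso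
          have hk1' : k = 1 := by
            obtain ⟨m, rfl⟩ := hk; omega
          exact h1 (by rw [hk1', ha1g1])
        · exact hge
      have hkr : (3 : ℝ) ≤ (k : ℝ) := by exact_mod_cast hk3
      calc min (min (gammaF t 4) (alphaF t 3)) (betaF t 4) ≤ alphaF t 3 :=
            le_trans (min_le_left _ _) (min_le_right _ _)
        _ ≤ alphaF t k := by
            rw [ha3]; unfold alphaF; rw [← hsdef]
            nlinarith [mul_nonneg ht.le (mul_nonneg
              (by linarith : (0:ℝ) ≤ (k:ℝ) - 3) (by linarith : (0:ℝ) ≤ (k:ℝ) + 5))]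
    · -- beta case
      obtain ⟨_, _, _, h4⟩ := hne
      have hl4 : 4 ≤ l := by
        rcases Nat.lt_or_ge l 4 with hlt | hge
        · exfalso
          have hl2' : l = 2 := by
            obtain ⟨m, rfl⟩ := hl; omega
          exact h4 (by rw [hl2', hb2])
        · exact hge
      have hlr : (4 : ℝ) ≤ (l : ℝ) := by exact_mod_cast hl4
      calc min (min (gammaF t 4) (alphaF t 3)) (betaF t 4) ≤ betaF t 4 := min_le_right _ _
        _ ≤ betaF t l := by
            rw [hb4]; unfold betaF
            nlinarith [mul_nonneg ht.le (mul_nonneg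
              (by linarith : (0:ℝ) ≤ (l:ℝ) - 4) (by linarith : (0:ℝ) ≤ (l:ℝ) + 6))]
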